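/- Let M be a symmetric positive-definite n×n real matrix. For z ∈ ℝⁿ define ‖z‖ := ⟨M z, z⟩^{1/2} and the dual norm ‖z‖^* := ⟨M⁻¹ z, z⟩^{1/2}, and for an n×n real matrix X define the operator norm ‖X‖_op := sup { ‖X u‖^* : u ∈ ℝⁿ, ‖u‖ ≤ 1 }. Then for all h, u ∈ ℝⁿ, ‖h hᵀ − u uᵀ‖_op ≤ ‖h − u‖^* · ‖h + u‖^*. -/

import Mathlib

open Matrix

private noncomputable def qn {n : ℕ} (A : Matrix (Fin n) (Fin n) ℝ) (x : Fin n → ℝ) : ℝ :=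
  Real.sqrt ((A *ᵥ x) ⬝ᵥ x)

private lemma qn_nonneg {n : ℕ} (A : Matrix (Fin n) (Fin n) ℝ) (x : Fin n → ℝ) :
    0 ≤ qn A x := Real.sqrt_nonneg _

private lemma master {n : ℕ} (A : Matrix (Fin n) (Fin n) ℝ) (hA : A.PosDef) :
    (∀ x y, x ⬝ᵥ (A *ᵥ y) ≤ qn A x * qn A y) ∧
    (∀ x y, qn A (x + y) ≤ qn A x + qn A y) ∧
    (∀ (c : ℝ) (x), qn A (c • x) = |c| * qn A x) := by
  have hsym : Aᵀ = A := by
    have := hA.isHermitian.eq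
    rw [← Matrix.conjTranspose_eq_transpose_of_trivial]; exact this
  set B : (Fin n → ℝ) → (Fin n → ℝ) → ℝ := fun x y => (A *ᵥ x) ⬝ᵥ y with hB
  have hBdef : ∀ x y, B x y = (A *ᵥ x) ⬝ᵥ y := fun _ _ => rfl
  have hBsymm : ∀ x y, B x y = B y x := by
    intro x y
    rw [hBdef, hBdef, dotProduct_comm, dotProduct_mulVec, ← mulVec_transpose, hsym]
  have hq : ∀ x, qn A x = Real.sqrt (B x x) := fun x => rfl
  have hq0 : ∀ x, 0 ≤ B x x := by
    intro x
    by_cases hx : x = 0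
    · simp [hx, hBdef]
    · exact le_of_lt (by simpa [hBdef, dotProduct_comm] using hA.dotProduct_mulVec_pos hx)
  have hBadd : ∀ x y z, B (x + y) z = B x z + B y z := by
    intro x y z; simp [hBdef, mulVec_add, add_dotProduct]
  have hBadd' : ∀ x y z, B z (x + y) = B z x + B z y := by
    intro x y z; rw [hBsymm, hBadd, hBsymm x z, hBsymm y z]
  have hBsmul : ∀ (c : ℝ) x y, B (c • x) y = c * B x y := by
    intro c x y; simp [hBdef, mulVec_smul, smul_dotProduct]
  have hBsmul' : ∀ (c : ℝ) x y, B x (c • y) = c * B x y := by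
    intro c x y; rw [hBsymm, hBsmul, hBsymm]
  have hsub : ∀ p q r, B (p - q) r = B p r - B q r := by
    intro p q r
    have := hBadd (p - q) q r
    rw [sub_add_cancel] at this
    linarith
  have hsub' : ∀ p q r, B r (p - q) = B r p - B r q := by
    intro p q r; rw [hBsymm, hsub, hBsymm p r, hBsymm q r]
  have cs2 : ∀ x y, (B x y) ^ 2 ≤ B x x * B y y := by
    intro x y
    by_cases hy : y = 0
    · simp [hy, hBdef]
    · have hyy : 0 < B y y := by
        simpa [hBdef, dotProduct_comm] using hA.dotProduct_mulVec_pos hy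
      have h0 : 0 ≤ B (B y y • x - B x y • y) (B y y • x - B x y • y) := hq0 _
      have hexp : B (B y y • x - B x y • y) (B y y • x - B x y • y)
          = B y y * (B x x * B y y - B x y ^ 2) := by
        simp only [hsub, hsub', hBsmul, hBsmul', hBsymm y x]
        ring
      rw [hexp] at h0
      nlinarith [h0, hyy]
  have cs : ∀ x y, B x y ≤ qn A x * qn A y := by
    intro x y
    rw [hq, hq, ← Real.sqrt_mul (hq0 x)]
    calc B x y ≤ |B x y| := le_abs_self _
      _ = Real.sqrt ((B x y) ^ 2) := (Real.sqrt_sq_eq_abs _).symm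
      _ ≤ Real.sqrt (B x x * B y y) := Real.sqrt_le_sqrt (cs2 x y)
  refine ⟨fun x y => ?_, fun x y => ?_, fun c x => ?_⟩
  · have hxy : x ⬝ᵥ (A *ᵥ y) = B x y := by
      rw [dotProduct_comm, ← hBdef, hBsymm]
    rw [hxy]; exact cs x y
  · have hexp : B (x + y) (x + y) = B x x + 2 * B x y + B y y := by
      rw [hBadd, hBadd', hBadd', hBsymm y x]; ring
    rw [hq, hq, hq, hexp]
    have h1 : B x x + 2 * B x y + B y y ≤
        (Real.sqrt (B x x) + Real.sqrt (B y y)) ^ 2 := by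
      have e1 : Real.sqrt (B x x) ^ 2 = B x x := Real.sq_sqrt (hq0 x)
      have e2 : Real.sqrt (B y y) ^ 2 = B y y := Real.sq_sqrt (hq0 y)
      have h2 := cs x y
      rw [hq, hq] at h2
      nlinarith [h2]
    calc Real.sqrt (B x x + 2 * B x y + B y y)
        ≤ Real.sqrt ((Real.sqrt (B x x) + Real.sqrt (B y y)) ^ 2) :=
          Real.sqrt_le_sqrt h1
      _ = Real.sqrt (B x x) + Real.sqrt (B y y) := by
          rw [Real.sqrt_sq (by positivity)]
  · rw [hq, hq, hBsmul, hBsmul']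
    rw [show c * (c * B x x) = c ^ 2 * B x x by ring, Real.sqrt_mul (sq_nonneg c),
      Real.sqrt_sq_eq_abs]

private lemma vecMulVec_mulVec' {n : ℕ} (a b z : Fin n → ℝ) :
    (vecMulVec a b) *ᵥ z = (b ⬝ᵥ z) • a := by
  funext i
  simp [mulVec, vecMulVec, dotProduct, Finset.mul_sum, mul_assoc, mul_comm, mul_left_comm]

/-- Lemma 7.1 (difference-of-squares bound):
`‖h hᵀ - u uᵀ‖_op ≤ ‖h - u‖^* ‖h + u‖^*` in the local norms induced by a
symmetric positive-definite `M`. -/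
theorem stmt_16 (n : ℕ) (M : Matrix (Fin n) (Fin n) ℝ) (hM : M.PosDef)
    (h u : Fin n → ℝ) :
    sSup {r : ℝ | ∃ z : Fin n → ℝ, Real.sqrt ((M *ᵥ z) ⬝ᵥ z) ≤ 1 ∧
        r = Real.sqrt ((M⁻¹ *ᵥ ((vecMulVec h h - vecMulVec u u) *ᵥ z)) ⬝ᵥ
              ((vecMulVec h h - vecMulVec u u) *ᵥ z))}
      ≤ Real.sqrt ((M⁻¹ *ᵥ (h - u)) ⬝ᵥ (h - u)) *
          Real.sqrt ((M⁻¹ *ᵥ (h + u)) ⬝ᵥ (h + u)) := by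
  have hMinv : M⁻¹.PosDef := hM.inv
  obtain ⟨csM, _, _⟩ := master M hM
  obtain ⟨csI, triI, smulI⟩ := master M⁻¹ hMinv
  set a := h - u with ha
  set b := h + u with hb
  have hMM : M * M⁻¹ = 1 := mul_nonsing_inv M (isUnit_iff_ne_zero.2 hM.det_pos.ne')
  -- |v ⬝ᵥ z| ≤ qn M⁻¹ v * qn M z
  have hdual : ∀ v z : Fin n → ℝ, |v ⬝ᵥ z| ≤ qn M⁻¹ v * qn M z := by
    intro v z
    have key : ∀ w : Fin n → ℝ, w ⬝ᵥ z ≤ qn M⁻¹ w * qn M z := by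
      intro w
      have h1 : (M⁻¹ *ᵥ w) ⬝ᵥ (M *ᵥ z) ≤ qn M (M⁻¹ *ᵥ w) * qn M z := csM _ _
      have h2 : qn M (M⁻¹ *ᵥ w) = qn M⁻¹ w := by
        unfold qn
        congr 1
        rw [mulVec_mulVec, hMM, one_mulVec, dotProduct_comm]
      have hsym : Mᵀ = M := by
        have := hM.isHermitian.eq
        rw [← Matrix.conjTranspose_eq_transpose_of_trivial]; exact this
      have h3 : (M⁻¹ *ᵥ w) ⬝ᵥ (M *ᵥ z) = w ⬝ᵥ z := by
        rw [dotProduct_mulVec, ← mulVec_transpose, hsym, mulVec_mulVec,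
          mul_nonsing_inv M (isUnit_iff_ne_zero.2 hM.det_pos.ne'), one_mulVec]
      rw [← h3, ← h2]; exact h1
    rcases abs_cases (v ⬝ᵥ z) with ⟨he, _⟩ | ⟨he, _⟩
    · rw [he]; exact key v
    · rw [he]
      have := key (-v)
      rwa [neg_dotProduct, show qn M⁻¹ (-v) = qn M⁻¹ v by
        simpa using smulI (-1) v] at this
  refine Real.sSup_le ?_ (mul_nonneg (Real.sqrt_nonneg _) (Real.sqrt_nonneg _))
  rintro r ⟨z, hz, rfl⟩
  have hz0 : 0 ≤ qn M z := qn_nonneg _ _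
  -- rewrite the vector
  have hw : (vecMulVec h h - vecMulVec u u) *ᵥ z
      = (2 : ℝ)⁻¹ • ((b ⬝ᵥ z) • a + (a ⬝ᵥ z) • b) := by
    rw [sub_mulVec, vecMulVec_mulVec', vecMulVec_mulVec']
    funext i
    simp only [ha, hb, Pi.smul_apply, Pi.add_apply, Pi.sub_apply, smul_eq_mul,
      sub_dotProduct, add_dotProduct]
    ring
  have step : Real.sqrt ((M⁻¹ *ᵥ ((vecMulVec h h - vecMulVec u u) *ᵥ z)) ⬝ᵥ
        ((vecMulVec h h - vecMulVec u u) *ᵥ z))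
      = qn M⁻¹ ((vecMulVec h h - vecMulVec u u) *ᵥ z) := by
    rw [qn, dotProduct_comm]
  rw [step, hw]
  have t1 : qn M⁻¹ ((2 : ℝ)⁻¹ • ((b ⬝ᵥ z) • a + (a ⬝ᵥ z) • b))
      ≤ (2 : ℝ)⁻¹ * (|b ⬝ᵥ z| * qn M⁻¹ a + |a ⬝ᵥ z| * qn M⁻¹ b) := by
    rw [smulI]
    have := triI ((b ⬝ᵥ z) • a) ((a ⬝ᵥ z) • b)
    rw [smulI, smulI] at this
    calc |(2:ℝ)⁻¹| * qn M⁻¹ ((b ⬝ᵥ z) • a + (a ⬝ᵥ z) • b)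
        ≤ |(2:ℝ)⁻¹| * (|b ⬝ᵥ z| * qn M⁻¹ a + |a ⬝ᵥ z| * qn M⁻¹ b) := by
          apply mul_le_mul_of_nonneg_left this (abs_nonneg _)
      _ = (2 : ℝ)⁻¹ * (|b ⬝ᵥ z| * qn M⁻¹ a + |a ⬝ᵥ z| * qn M⁻¹ b) := by
          norm_num
  have hza : |a ⬝ᵥ z| ≤ qn M⁻¹ a := by
    calc |a ⬝ᵥ z| ≤ qn M⁻¹ a * qn M z := hdual a z
      _ ≤ qn M⁻¹ a * 1 := mul_le_mul_of_nonneg_left hz (qn_nonneg _ _)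
      _ = qn M⁻¹ a := mul_one _
  have hzb : |b ⬝ᵥ z| ≤ qn M⁻¹ b := by
    calc |b ⬝ᵥ z| ≤ qn M⁻¹ b * qn M z := hdual b z
      _ ≤ qn M⁻¹ b * 1 := mul_le_mul_of_nonneg_left hz (qn_nonneg _ _)
      _ = qn M⁻¹ b := mul_one _
  have final : (2 : ℝ)⁻¹ * (|b ⬝ᵥ z| * qn M⁻¹ a + |a ⬝ᵥ z| * qn M⁻¹ b)
      ≤ qn M⁻¹ a * qn M⁻¹ b := by
    have h1 : |b ⬝ᵥ z| * qn M⁻¹ a ≤ qn M⁻¹ b * qn M⁻¹ a :=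
      mul_le_mul_of_nonneg_right hzb (qn_nonneg _ _)
    have h2 : |a ⬝ᵥ z| * qn M⁻¹ b ≤ qn M⁻¹ a * qn M⁻¹ b :=
      mul_le_mul_of_nonneg_right hza (qn_nonneg _ _)
    nlinarith [qn_nonneg M⁻¹ a, qn_nonneg M⁻¹ b]
  calc qn M⁻¹ ((2 : ℝ)⁻¹ • ((b ⬝ᵥ z) • a + (a ⬝ᵥ z) • b))
      ≤ (2 : ℝ)⁻¹ * (|b ⬝ᵥ z| * qn M⁻¹ a + |a ⬝ᵥ z| * qn M⁻¹ b) := t1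
    _ ≤ qn M⁻¹ a * qn M⁻¹ b := final
    _ = Real.sqrt ((M⁻¹ *ᵥ (h - u)) ⬝ᵥ (h - u)) *
          Real.sqrt ((M⁻¹ *ᵥ (h + u)) ⬝ᵥ (h + u)) := by
        rw [qn, qn, dotProduct_comm, dotProduct_comm ((M⁻¹) *ᵥ b)]
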